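/- Let ⊦ be a preferential consequence relation and define α ≤ β iff α ∨ β ⊦ α. Then the relation ≤ on formulas is reflexive and transitive. -/

import Mathlib

namespace KLM

/-- Classical propositional formulas over a set `V` of propositional variables. -/
inductive Form (V : Type) : Type
  | var : V → Form V
  | fls : Form V
  | neg : Form V → Form V
  | conj : Form V → Form V → Form V
  | disj : Form V → Form V → Form V
  | impl : Form V → Form V → Form V
  | biim : Form V → Form V → Form V

/-- A world is a truth assignment to the propositional variables. -/
abbrev World (V : Type) := V → Prop

/-- Satisfaction of a formula by a world (usual classical semantics). -/
def Sat {V : Type} (u : World V) : Form V → Prop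
  | Form.var p => u p
  | Form.fls => False
  | Form.neg a => ¬ Sat u a
  | Form.conj a b => Sat u a ∧ Sat u b
  | Form.disj a b => Sat u a ∨ Sat u b
  | Form.impl a b => Sat u a → Sat u b
  | Form.biim a b => Sat u a ↔ Sat u b

variable {V : Type}

/-- `⊨ α` : every world of the universe `U` satisfies `α`. -/
def Valid (U : Set (World V)) (a : Form V) : Prop := ∀ u ∈ U, Sat u a

/-- Reflexivity: α ⊦ α. -/
def Reflexivity (C : Form V → Form V → Prop) : Prop := ∀ a, C a a

/-- Left Logical Equivalence. -/
def LLE (U : Set (World V)) (C : Form V → Form V → Prop) : Prop :=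
  ∀ a b c, Valid U (Form.biim a b) → C a c → C b c

/-- Right Weakening. -/
def RW (U : Set (World V)) (C : Form V → Form V → Prop) : Prop :=
  ∀ a b c, Valid U (Form.impl a b) → C c a → C c b

/-- Cut. -/
def CutRule (C : Form V → Form V → Prop) : Prop :=
  ∀ a b c, C (Form.conj a b) c → C a b → C a c

/-- Cautious Monotonicity. -/
def CautMono (C : Form V → Form V → Prop) : Prop :=
  ∀ a b c, C a b → C a c → C (Form.conj a b) c

/-- A consequence relation is cumulative iff it satisfies Reflexivity, LLE, RW,
Cut and Cautious Monotonicity. -/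
def Cumulative (U : Set (World V)) (C : Form V → Form V → Prop) : Prop :=
  Reflexivity C ∧ LLE U C ∧ RW U C ∧ CutRule C ∧ CautMono C

/-- And rule. -/
def AndRule (C : Form V → Form V → Prop) : Prop :=
  ∀ a b c, C a b → C a c → C a (Form.conj b c)

/-- Or rule. -/
def OrRule (C : Form V → Form V → Prop) : Prop :=
  ∀ a b c, C a c → C b c → C (Form.disj a b) c

/-- A consequence relation is preferential iff it is cumulative and satisfies Or. -/
def Preferential (U : Set (World V)) (C : Form V → Form V → Prop) : Prop :=
  Cumulative U C ∧ OrRule C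

/-- Monotonicity. -/
def Monot (U : Set (World V)) (C : Form V → Form V → Prop) : Prop :=
  ∀ a b c, Valid U (Form.impl a b) → C b c → C a c

/-- EHD : easy half of the deduction theorem. -/
def EHD (C : Form V → Form V → Prop) : Prop :=
  ∀ a b c, C a (Form.impl b c) → C (Form.conj a b) c

/-- Transitivity. -/
def TransRule (C : Form V → Form V → Prop) : Prop :=
  ∀ a b c, C a b → C b c → C a c

/-- Contraposition. -/
def Contraposition (C : Form V → Form V → Prop) : Prop :=
  ∀ a b, C a b → C (Form.neg b) (Form.neg a)

/-- The rule S: from α ∧ β ⊦ γ infer α ⊦ β → γ. -/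
def SRule (C : Form V → Form V → Prop) : Prop :=
  ∀ a b c, C (Form.conj a b) c → C a (Form.impl b c)

/-- MPC : modus ponens in the consequent. -/
def MPC (C : Form V → Form V → Prop) : Prop :=
  ∀ a b c, C a (Form.impl b c) → C a b → C a c

/-- Equivalence rule. -/
def EquivRule (C : Form V → Form V → Prop) : Prop :=
  ∀ a b c, C a b → C b a → C a c → C b c

/-- Loop rule. -/
def LoopRule (C : Form V → Form V → Prop) : Prop :=
  ∀ k : ℕ, 1 ≤ k → ∀ al : ℕ → Form V,
    (∀ i < k, C (al i) (al (i + 1))) → C (al k) (al 0) → C (al 0) (al k)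

/-- A world `m ∈ U` is normal for `α` iff it satisfies every plausible consequence of `α`. -/
def NormalFor (U : Set (World V)) (C : Form V → Form V → Prop)
    (a : Form V) (m : World V) : Prop :=
  m ∈ U ∧ ∀ b, C a b → Sat m b

/-- Compactness assumption on the universe `U`: a set of formulas all of whose finite
subsets are satisfiable (in `U`) is satisfiable (in `U`). -/
def Compactness (U : Set (World V)) : Prop :=
  ∀ G : Set (Form V),
    (∀ F : Finset (Form V), ↑F ⊆ G → ∃ u ∈ U, ∀ a ∈ F, Sat u a) →
    ∃ u ∈ U, ∀ a ∈ G, Sat u a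

/-- `t` is minimal in `A` (w.r.t. `prec`) iff `t ∈ A` and no element of `A` is below `t`. -/
def MinimalIn {S : Type} (prec : S → S → Prop) (A : Set S) (t : S) : Prop :=
  t ∈ A ∧ ∀ s ∈ A, ¬ prec s t

/-- `A` is smooth iff every element of `A` is minimal in `A` or has a minimal
element of `A` below it. -/
def Smooth {S : Type} (prec : S → S → Prop) (A : Set S) : Prop :=
  ∀ t ∈ A, MinimalIn prec A t ∨ ∃ s, prec s t ∧ MinimalIn prec A s

/-- A cumulative model: states labeled by nonempty sets of worlds of `U`, with a
binary preference relation satisfying the smoothness condition. -/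
structure CumulModel (V : Type) (U : Set (World V)) where
  S : Type
  l : S → Set (World V)
  l_sub : ∀ s, l s ⊆ U
  l_ne : ∀ s, (l s).Nonempty
  prec : S → S → Prop
  smooth : ∀ a : Form V, Smooth prec {s : S | ∀ u ∈ l s, Sat u a}

/-- A state satisfies `α` iff every world in its label does. -/
def CumulModel.StateSat {V : Type} {U : Set (World V)} (W : CumulModel V U)
    (s : W.S) (a : Form V) : Prop :=
  ∀ u ∈ W.l s, Sat u a

/-- The consequence relation defined by a cumulative model: `α ⊦_W β` iff every state
minimal in `α̂` satisfies `β`. -/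
def CumulModel.Cons {V : Type} {U : Set (World V)} (W : CumulModel V U)
    (a b : Form V) : Prop :=
  ∀ s : W.S, MinimalIn W.prec {t : W.S | W.StateSat t a} s → W.StateSat s b

/-- A preferential model: states labeled by single worlds of `U`, with a strict
partial order satisfying the smoothness condition. -/
structure PrefModel (V : Type) (U : Set (World V)) where
  S : Type
  l : S → World V
  l_mem : ∀ s, l s ∈ U
  prec : S → S → Prop
  irrefl : ∀ s, ¬ prec s s
  trans : ∀ s t r, prec s t → prec t r → prec s r
  smooth : ∀ a : Form V, Smooth prec {s : S | Sat (l s) a}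

/-- The consequence relation defined by a preferential model. -/
def PrefModel.Cons {V : Type} {U : Set (World V)} (W : PrefModel V U)
    (a b : Form V) : Prop :=
  ∀ s : W.S, MinimalIn W.prec {t : W.S | Sat (W.l t) a} s → Sat (W.l s) b

/-- for a preferential relation, the ordinarity relation
α ≤ β iff α ∨ β ⊦ α is reflexive and transitive. -/
theorem stmt15 {V : Type} (U : Set (World V)) (C : Form V → Form V → Prop)
    (hP : Preferential U C) :
    (∀ a : Form V, C (Form.disj a a) a) ∧
    (∀ a b c : Form V,
      C (Form.disj a b) a → C (Form.disj b c) b → C (Form.disj a c) a) := by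
  obtain ⟨⟨hRefl, hLLE, hRW, hCut, hCM⟩, hOr⟩ := hP
  constructor
  · intro a
    exact hLLE a (Form.disj a a) a (fun u _ => by simp [Sat, or_self]) (hRefl a)
  · intro a b c h1 h2
    set d := Form.disj a (Form.disj b c) with hd
    -- d ⊦ a ∨ b
    have hbc : C (Form.disj b c) (Form.disj a b) :=
      hRW b (Form.disj a b) (Form.disj b c)
        (fun u _ => by simp only [Sat]; tauto) h2
    have hab : C (Form.disj a b) (Form.disj a b) := hRefl _
    have hor : C (Form.disj (Form.disj a b) (Form.disj b c)) (Form.disj a b) :=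
      hOr _ _ _ hab hbc
    have hdab : C d (Form.disj a b) :=
      hLLE _ d _ (fun u _ => by simp only [hd, Sat]; tauto) hor
    -- d ∧ (a ∨ b) ⊦ a, via LLE from a ∨ b ⊦ a
    have hdaba : C (Form.conj d (Form.disj a b)) a :=
      hLLE (Form.disj a b) _ a (fun u _ => by simp only [hd, Sat]; tauto) h1
    -- Cut: d ⊦ a
    have hda : C d a := hCut d (Form.disj a b) a hdaba hdab
    -- d ⊦ a ∨ c
    have hdac : C d (Form.disj a c) :=
      hRW a (Form.disj a c) d (fun u _ => by simp only [Sat]; tauto) hda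
    -- CM: d ∧ (a ∨ c) ⊦ a
    have hcm : C (Form.conj d (Form.disj a c)) a := hCM d (Form.disj a c) a hdac hda
    -- LLE: a ∨ c ⊦ a
    exact hLLE _ (Form.disj a c) a (fun u _ => by simp only [hd, Sat]; tauto) hcm

end KLM
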